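/- In a matroid N, let P be a rank-1 flat, H a rank-(k-2) flat, x, y elements such that H ∪ P ∪ {x,y}, H ∪ {x,y}, and P ∪ {x,y} are flats of ranks k+1, k, and 3 respectively, with z ∈ P such that {x,z} is a two-point line, and let F' be a rank-(k-1) flat contained in H ∪ {x,y} containing x but not y. Then F' ∪ {z} is a flat of rank k, and hence an ordinary rank-k flat (the direct sum of F' and the point {z}). -/

import Mathlib

open Set Matroid

namespace SG

variable {α : Type*}

/-- The rank of a set in a matroid: the supremum of sizes of independent subsets. -/
noncomputable def rk (M : Matroid α) (X : Set α) : ℕ :=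
  sSup (Set.ncard '' {I | M.Indep I ∧ I ⊆ X})

/-- The rank of a matroid. -/
noncomputable def rank (M : Matroid α) : ℕ := rk M M.E

/-- `F` is a rank-`k` flat of `M`. -/
def IsRkFlat (M : Matroid α) (k : ℕ) (F : Set α) : Prop := M.IsFlat F ∧ rk M F = k

/-- A matroid is loopless if every element has rank one. -/
def Loopless (M : Matroid α) : Prop := ∀ e ∈ M.E, rk M {e} = 1

/-- A matroid is simple if it has no loops and no parallel pairs. -/
def Simple (M : Matroid α) : Prop :=
  Loopless M ∧ ∀ e ∈ M.E, ∀ f ∈ M.E, rk M {e, f} ≤ 1 → e = f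

/-- `M` is representable over the field `𝔽`. -/
def Representable (𝔽 : Type) [Field 𝔽] (M : Matroid α) : Prop :=
  ∃ φ : α → (α →₀ 𝔽), ∀ I ⊆ M.E,
    (M.Indep I ↔ LinearIndependent 𝔽 (fun x : I => φ x.1))

/-- The contraction `M/C`, defined by duality: `M/C = (M✶ ＼ C)✶`. -/
noncomputable def contract (M : Matroid α) (C : Set α) : Matroid α :=
  (M✶ ↾ (M.E \ C))✶

/-- `F` is an ordinary rank-`k` flat: the direct sum of a point and a rank-`(k-1)` flat. -/
def OrdinaryFlat (M : Matroid α) (k : ℕ) (F : Set α) : Prop :=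
  IsRkFlat M k F ∧ ∃ P F₁, IsRkFlat M 1 P ∧ IsRkFlat M (k-1) F₁ ∧
    F = P ∪ F₁ ∧ rk M F = rk M P + rk M F₁

/-- `F` is an elementary rank-`k` flat: a rank-`k` flat with exactly `k` elements. -/
def ElementaryFlat (M : Matroid α) (k : ℕ) (F : Set α) : Prop :=
  IsRkFlat M k F ∧ F.ncard = k

/-- A three-point line: a simple rank-2 matroid on three elements (i.e. `U_{2,3}`). -/
def IsThreePointLine (M : Matroid α) : Prop :=
  M.E.ncard = 3 ∧ Simple M ∧ rank M = 2

/-- The ternary affine plane AG(2,3): a simple rank-3 matroid on nine points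
in which every line has exactly three points. -/
def IsAG23 (M : Matroid α) : Prop :=
  M.E.ncard = 9 ∧ Simple M ∧ rank M = 3 ∧ ∀ L, IsRkFlat M 2 L → L.ncard = 3


variable {M : Matroid α} {X Y I J F : Set α} {e : α}

lemma flat_closure (M : Matroid α) (X : Set α) : M.IsFlat (M.closure X) := by
  have hne : Nonempty {F // M.IsFlat F ∧ X ∩ M.E ⊆ F} :=
    ⟨⟨M.E, M.ground_isFlat, inter_subset_right⟩⟩
  have : M.closure X = ⋂ (F : {F // M.IsFlat F ∧ X ∩ M.E ⊆ F}), F.1 := by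
    rw [Matroid.closure_def, sInter_eq_iInter]
    rfl
  rw [this]
  exact Matroid.IsFlat.iInter fun F => F.2.1

noncomputable def erk (M : Matroid α) (X : Set α) : ℕ∞ := (M.exists_isBasis' X).choose.encard

lemma erk_eq_of_basis' (hI : M.IsBasis' I X) : erk M X = I.encard :=
  (M.exists_isBasis' X).choose_spec.encard_eq_encard hI

lemma erk_mono (h : X ⊆ Y) : erk M X ≤ erk M Y := by
  obtain ⟨I, hI⟩ := M.exists_isBasis' X
  obtain ⟨J, hJ, hIJ⟩ := hI.indep.subset_isBasis'_of_subset (hI.subset.trans h)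
  rw [erk_eq_of_basis' hI, erk_eq_of_basis' hJ]
  exact encard_mono hIJ

lemma erk_le_encard (M : Matroid α) (X : Set α) : erk M X ≤ X.encard := by
  obtain ⟨I, hI⟩ := M.exists_isBasis' X
  rw [erk_eq_of_basis' hI]
  exact encard_mono hI.subset

lemma erk_closure_eq (M : Matroid α) (X : Set α) : erk M (M.closure X) = erk M X := by
  obtain ⟨I, hI⟩ := M.exists_isBasis' X
  rw [erk_eq_of_basis' hI.isBasis_closure_right.isBasis', erk_eq_of_basis' hI]

lemma indep_of_erk_eq_encard (h : erk M X = X.encard) (hfin : X.Finite) : M.Indep X := by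
  obtain ⟨I, hI⟩ := M.exists_isBasis' X
  rw [erk_eq_of_basis' hI] at h
  have hIX : I = X := (hfin.subset hI.subset).eq_of_subset_of_encard_le hI.subset h.ge
  exact hIX ▸ hI.indep

lemma erk_insert_of_not_mem_closure (he : e ∈ M.E) (heX : e ∉ M.closure X) :
    erk M (insert e X) = erk M X + 1 := by
  obtain ⟨I, hI⟩ := M.exists_isBasis' X
  have hIcl : M.closure I = M.closure X := hI.closure_eq_closure
  have heI : e ∉ I := fun h => heX (hIcl ▸ M.mem_closure_of_mem' h he)
  have hi : M.Indep (insert e I) := by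
    rw [hI.indep.insert_indep_iff_of_notMem heI, hIcl]
    exact ⟨he, heX⟩
  have hb : M.IsBasis (insert e I) (insert e X ∩ M.E) := by
    have hXE : insert e X ∩ M.E = insert e (X ∩ M.E) := by
      rw [insert_inter_of_mem he]
    rw [hXE]
    refine hi.isBasis_of_subset_of_subset_closure
      (insert_subset_insert (hI.isBasis_inter_ground.subset)) ?_
    refine insert_subset (M.mem_closure_of_mem' (mem_insert _ _) he) ?_
    refine (hI.isBasis_inter_ground.subset_closure).trans (M.closure_subset_closure ?_)
    exact subset_insert _ _
  have hb' : M.IsBasis' (insert e I) (insert e X) := by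
    rw [Matroid.isBasis'_iff_isBasis_inter_ground]
    exact hb
  rw [erk_eq_of_basis' hb', erk_eq_of_basis' hI, encard_insert_of_notMem heI]

lemma erk_union_le (M : Matroid α) (X Y : Set α) : erk M (X ∪ Y) ≤ erk M X + erk M Y := by
  obtain ⟨I, hI⟩ := M.exists_isBasis' X
  obtain ⟨J, hJ⟩ := M.exists_isBasis' Y
  have hcl : M.closure (I ∪ J) = M.closure (X ∪ Y) := by
    rw [← M.closure_closure_union_closure_eq_closure_union I J,
      hI.closure_eq_closure, hJ.closure_eq_closure,
      M.closure_closure_union_closure_eq_closure_union]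
  calc erk M (X ∪ Y) = erk M (M.closure (X ∪ Y)) := (erk_closure_eq M _).symm
    _ = erk M (M.closure (I ∪ J)) := by rw [hcl]
    _ = erk M (I ∪ J) := erk_closure_eq M _
    _ ≤ (I ∪ J).encard := erk_le_encard M _
    _ ≤ I.encard + J.encard := encard_union_le I J
    _ = erk M X + erk M Y := by rw [erk_eq_of_basis' hI, erk_eq_of_basis' hJ]

lemma subset_flat_of_erk_le (hF : M.IsFlat F) (hfin : erk M F ≠ ⊤) (hFX : F ⊆ X)
    (hXE : X ⊆ M.E) (hle : erk M X ≤ erk M F) : X ⊆ F := by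
  intro w hw
  by_contra hwF
  have h1 : erk M (insert w F) = erk M F + 1 :=
    erk_insert_of_not_mem_closure (hXE hw) (by rwa [hF.closure])
  have h2 : erk M (insert w F) ≤ erk M X := erk_mono (insert_subset hw hFX)
  rw [h1] at h2
  have h3 : erk M F + 1 ≤ erk M F := h2.trans hle
  lift erk M F to ℕ using hfin with n
  exact absurd h3 (by exact_mod_cast by omega)

lemma rk_eq_toNat_erk (M : Matroid α) (X : Set α) : rk M X = (erk M X).toNat := by
  obtain ⟨I, hI⟩ := M.exists_isBasis' X
  rw [erk_eq_of_basis' hI, ← Set.ncard_def]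
  by_cases hfin : I.Finite
  · have hub : ∀ n ∈ Set.ncard '' {J | M.Indep J ∧ J ⊆ X}, n ≤ I.ncard := by
      rintro n ⟨J, ⟨hJi, hJX⟩, rfl⟩
      obtain ⟨J', hJ', hJJ'⟩ := hJi.subset_isBasis'_of_subset hJX
      have hcard : J'.encard = I.encard := hJ'.encard_eq_encard hI
      have hJ'fin : J'.Finite := by
        rw [← encard_ne_top_iff, hcard, encard_ne_top_iff]; exact hfin
      have : J'.ncard = I.ncard := by rw [ncard_def, ncard_def, hcard]
      exact this ▸ ncard_le_ncard hJJ' hJ'fin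
    refine le_antisymm (csSup_le ⟨0, ∅, ⟨M.empty_indep, empty_subset X⟩, by simp⟩ hub) ?_
    exact le_csSup ⟨I.ncard, hub⟩ ⟨I, ⟨hI.indep, hI.subset⟩, rfl⟩
  · have hinf : I.Infinite := hfin
    rw [hinf.ncard]
    have : ¬ BddAbove (Set.ncard '' {J | M.Indep J ∧ J ⊆ X}) := by
      rintro ⟨n, hn⟩
      obtain ⟨J, hJI, hJcard⟩ := hinf.exists_subset_ncard_eq (n + 1)
      have : n + 1 ≤ n := hn ⟨J, ⟨hI.indep.subset hJI, hJI.trans hI.subset⟩, hJcard.2⟩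
      omega
    rw [rk, csSup_of_not_bddAbove this, csSup_empty]
    rfl



namespace Main

variable {N : Matroid α} {n : ℕ}

lemma erk_eq_of_rk_eq (h : rk N X = n) (hn : n ≠ 0) : erk N X = n := by
  rw [rk_eq_toNat_erk] at h
  cases h' : erk N X with
  | top => rw [h', ENat.toNat_top] at h; omega
  | coe m => rw [h', ENat.toNat_coe] at h; exact_mod_cast h

lemma erk_eq_of_rk_eq' (h : rk N X = n) (hfin : erk N X ≠ ⊤) : erk N X = n := by
  rw [rk_eq_toNat_erk] at h
  lift erk N X to ℕ using hfin with m
  rw [ENat.toNat_coe] at h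
  exact_mod_cast h

end Main


theorem main_aux {α : Type*} (N : Matroid α) (k : ℕ) (P H F' : Set α)
    (x y z : α) (hP : IsRkFlat N 1 P) (hH : IsRkFlat N (k-2) H)
    (hx : x ∈ N.E) (hy : y ∈ N.E)
    (h1 : IsRkFlat N (k+1) (H ∪ P ∪ {x, y}))
    (h2 : IsRkFlat N k (H ∪ {x, y}))
    (h3 : IsRkFlat N 3 (P ∪ {x, y}))
    (hzP : z ∈ P) (hxz : IsRkFlat N 2 {x, z}) (hxzcl : N.closure {x, z} = {x, z})
    (hF' : IsRkFlat N (k-1) F') (hF'sub : F' ⊆ H ∪ {x, y})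
    (hxF' : x ∈ F') (hyF' : y ∉ F') :
    IsRkFlat N k (F' ∪ {z}) ∧ 2 ≤ k ∧ P = {z} := by
  -- basic erk values
  have h1e : erk N (H ∪ P ∪ {x, y}) = (k : ℕ∞) + 1 := by
    have := Main.erk_eq_of_rk_eq h1.2 (by omega); exact_mod_cast this
  have hxz2 : erk N {x, z} = 2 := by
    have := Main.erk_eq_of_rk_eq hxz.2 (by omega); exact_mod_cast this
  have hPe : erk N P = 1 := by
    have := Main.erk_eq_of_rk_eq hP.2 (by omega); exact_mod_cast this
  have hLe : erk N (P ∪ {x, y}) = 3 := by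
    have := Main.erk_eq_of_rk_eq h3.2 (by omega); exact_mod_cast this
  -- erk {x,y} = 2
  have hxy_le : erk N {x, y} ≤ 2 := by
    refine (erk_le_encard N _).trans ((encard_insert_le _ _).trans ?_)
    rw [encard_singleton]
    exact le_of_eq one_add_one_eq_two
  have hxy2 : erk N {x, y} = 2 := by
    have h3le : (3 : ℕ∞) ≤ 1 + erk N {x, y} := by
      rw [← hPe, ← hLe]; exact erk_union_le N P {x, y}
    have hne : erk N {x, y} ≠ ⊤ := fun h => by rw [h] at hxy_le; simp at hxy_le
    lift erk N {x, y} to ℕ using hne with m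
    have h1' : (3 : ℕ) ≤ 1 + m := by exact_mod_cast h3le
    have h2' : m ≤ 2 := by exact_mod_cast hxy_le
    norm_cast
    omega
  -- erk (H ∪ {x,y}) = k and k ≥ 2
  have hsubBig : H ∪ {x, y} ⊆ H ∪ P ∪ {x, y} := by
    rw [union_assoc]; exact union_subset_union_right H subset_union_right
  have hBfin : erk N (H ∪ {x, y}) ≠ ⊤ := by
    intro h
    have hle := erk_mono (M := N) hsubBig
    rw [h, h1e, top_le_iff] at hle
    have : ((k + 1 : ℕ) : ℕ∞) = ⊤ := by exact_mod_cast hle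
    exact (ENat.coe_ne_top _) this
  have hBe : erk N (H ∪ {x, y}) = (k : ℕ∞) := Main.erk_eq_of_rk_eq' h2.2 hBfin
  have hk2 : 2 ≤ k := by
    have := erk_mono (M := N) (show {x, y} ⊆ H ∪ {x, y} from subset_union_right)
    rw [hxy2, hBe] at this
    exact_mod_cast this
  have hF'e : erk N F' = ((k - 1 : ℕ) : ℕ∞) := Main.erk_eq_of_rk_eq hF'.2 (by omega)
  have hcast : ((k - 1 : ℕ) : ℕ∞) + 1 = (k : ℕ∞) := by
    rw [← Nat.cast_add_one, show k - 1 + 1 = k from by omega]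
  -- x ≠ z, {x,z} independent, z basic facts
  have hxz_ne : x ≠ z := by
    intro h
    subst h
    have hle : erk N {x, x} ≤ 1 := by
      refine (erk_le_encard N _).trans ?_
      rw [pair_eq_singleton, encard_singleton]
    rw [hxz2] at hle
    have : (2 : ℕ) ≤ 1 := by exact_mod_cast hle
    omega
  have hIxz : N.Indep {x, z} := indep_of_erk_eq_encard
    (by rw [hxz2, encard_pair hxz_ne]) ((finite_singleton z).insert x)
  have hzE : z ∈ N.E := hIxz.subset_ground (by simp)
  have hz1 : erk N {z} = 1 := by
    rw [erk_eq_of_basis' (hIxz.subset (by simp : ({z} : Set α) ⊆ {x, z})).isBasis_self.isBasis']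
    exact encard_singleton z
  -- P = closure {z} = {z}
  have sub1 : N.closure {z} ⊆ P := by
    have := N.closure_subset_closure (singleton_subset_iff.mpr hzP)
    rwa [hP.1.closure] at this
  have hPcl : P = N.closure {z} := by
    refine (subset_flat_of_erk_le (flat_closure N {z}) ?_ sub1 hP.1.subset_ground ?_).antisymm sub1
    · rw [erk_closure_eq, hz1]; simp
    · rw [erk_closure_eq, hz1, hPe]
  have hxP : x ∉ P := by
    intro hxPmem
    have hsub : {x, z} ⊆ N.closure {z} := by
      rw [← hPcl]
      exact insert_subset hxPmem (singleton_subset_iff.mpr hzP)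
    have hle := erk_mono (M := N) hsub
    rw [hxz2, erk_closure_eq, hz1] at hle
    have : (2 : ℕ) ≤ 1 := by exact_mod_cast hle
    omega
  have hPz : P = {z} := by
    apply subset_antisymm _ (singleton_subset_iff.mpr hzP)
    intro w hw
    have hw2 : w ∈ ({x, z} : Set α) := by
      have h' := N.closure_subset_closure (show ({z} : Set α) ⊆ {x, z} by simp)
      rw [hxzcl] at h'
      exact h' (hPcl ▸ hw)
    rcases hw2 with h | h
    · exact absurd (h ▸ hw) hxP
    · exact h
  -- z not in H ∪ {x,y}
  have hzy : z ≠ y := by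
    intro h
    have heq : P ∪ {x, y} = {x, y} := by
      rw [hPz, h]
      exact union_eq_self_of_subset_left (by simp)
    rw [heq, hxy2] at hLe
    have : (2 : ℕ) = 3 := by exact_mod_cast hLe
    omega
  have hzH : z ∉ H := by
    intro hzHmem
    have hPH : P ⊆ H := by rw [hPz]; simpa
    have heq : H ∪ P ∪ {x, y} = H ∪ {x, y} := by
      rw [union_eq_self_of_subset_right hPH]
    rw [heq, hBe] at h1e
    have : (k : ℕ∞) + 1 = (k : ℕ∞) := h1e.symm
    rw [← hcast] at this
    have : k - 1 + 1 + 1 = k - 1 + 1 := by exact_mod_cast this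
    omega
  have hzB : z ∉ H ∪ {x, y} := by
    rintro (h | h | h)
    · exact hzH h
    · exact hxz_ne h.symm
    · exact hzy h
  have hzF' : z ∉ F' := fun h => hzB (hF'sub h)
  -- the closure G
  set G := N.closure (insert z F') with hGdef
  have hGflat : N.IsFlat G := flat_closure N _
  have hF'E : F' ⊆ N.E := hF'.1.subset_ground
  have hins : insert z F' ⊆ N.E := insert_subset hzE hF'E
  have hGe : erk N G = (k : ℕ∞) := by
    rw [hGdef, erk_closure_eq,
      erk_insert_of_not_mem_closure hzE (by rw [hF'.1.closure]; exact hzF'), hF'e, hcast]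
  have hsubG : insert z F' ⊆ G := N.subset_closure _ hins
  have hzG : z ∈ G := hsubG (mem_insert _ _)
  have hGsub : G ⊆ H ∪ P ∪ {x, y} := by
    rw [hGdef, ← h1.1.closure]
    apply N.closure_subset_closure
    apply insert_subset
    · rw [union_assoc]; exact Or.inr (Or.inl hzP)
    · exact hF'sub.trans hsubBig
  have hGE : G ⊆ N.E := hGflat.subset_ground
  -- key claim
  have key : ∀ w ∈ G, w ∈ H ∪ {x, y} → w ∈ F' := by
    intro w hwG hwB
    by_contra hwF'
    have hwE : w ∈ N.E := hGE hwG
    have hG2e : erk N (N.closure (insert w F')) = (k : ℕ∞) := by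
      rw [erk_closure_eq,
        erk_insert_of_not_mem_closure hwE (by rw [hF'.1.closure]; exact hwF'), hF'e, hcast]
    have hG2G : N.closure (insert w F') ⊆ G := by
      rw [hGdef, ← N.closure_closure (insert z F')]
      apply N.closure_subset_closure
      exact insert_subset hwG ((subset_insert z F').trans hsubG)
    have hGsubG2 : G ⊆ N.closure (insert w F') := by
      refine subset_flat_of_erk_le (flat_closure N _) ?_ hG2G hGE ?_
      · rw [hG2e]; exact ENat.coe_ne_top k
      · rw [hG2e, hGe]
    have hG2B : N.closure (insert w F') ⊆ H ∪ {x, y} := by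
      rw [← h2.1.closure]
      exact N.closure_subset_closure (insert_subset hwB hF'sub)
    exact hzB (hG2B (hGsubG2 hzG))
  -- G = F' ∪ {z}
  have hGeq : G = F' ∪ {z} := by
    apply subset_antisymm
    · intro w hw
      rcases hGsub hw with (h | h) | h
      · exact Or.inl (key w hw (Or.inl h))
      · exact Or.inr (hPz ▸ h)
      · exact Or.inl (key w hw (Or.inr h))
    · rw [union_singleton]
      exact hsubG
  refine ⟨⟨hGeq ▸ hGflat, ?_⟩, hk2, hPz⟩
  rw [rk_eq_toNat_erk, ← hGeq, hGe, ENat.toNat_coe]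


/-- Claim 2 of the main proof: `F' ∪ {z}` is an ordinary rank-`k` flat. -/
theorem ordinary_flat_construction {α : Type*} (N : Matroid α) (k : ℕ) (P H F' : Set α)
    (x y z : α) (hP : IsRkFlat N 1 P) (hH : IsRkFlat N (k - 2) H)
    (hx : x ∈ N.E) (hy : y ∈ N.E)
    (h1 : IsRkFlat N (k + 1) (H ∪ P ∪ {x, y}))
    (h2 : IsRkFlat N k (H ∪ {x, y}))
    (h3 : IsRkFlat N 3 (P ∪ {x, y}))
    (hzP : z ∈ P) (hxz : IsRkFlat N 2 {x, z}) (hxzcl : N.closure {x, z} = {x, z})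
    (hF' : IsRkFlat N (k - 1) F') (hF'sub : F' ⊆ H ∪ {x, y})
    (hxF' : x ∈ F') (hyF' : y ∉ F') :
    IsRkFlat N k (F' ∪ {z}) ∧ OrdinaryFlat N k (F' ∪ {z}) := by
  obtain ⟨hfl, hk2, hPz⟩ := main_aux N k P H F' x y z hP hH hx hy h1 h2 h3 hzP hxz hxzcl
    hF' hF'sub hxF' hyF'
  refine ⟨hfl, hfl, P, F', hP, hF', ?_, ?_⟩
  · rw [hPz, union_comm]
  · rw [hfl.2, hP.2, hF'.2]
    omega


end SG
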